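/- Let S = Σ_{n=0}^∞ (−1)ⁿ e^{−(n+1/2)π} / ((2n+1)(1 + e^{−(2n+1)π})) and fix μ > 0 and P ∈ ℝ. Then for all sufficiently large λ the propagator G(P; λ, μ) is defined, and lim_{λ→∞} √λ · μ² · G(P; λ, μ) = −4√2 S; i.e. in the strong-coupling (equivalently low-momentum) limit the propagator reduces at leading order to a momentum-independent Nambu–Jona-Lasinio contact term of order λ^{−1/2}. -/

import Mathlib

open Real

/-- The complete elliptic integral `K(i) = ∫₀^{π/2} dθ/√(1 + sin²θ)`. -/
noncomputable def Kell : ℝ := ∫ θ in (0:ℝ)..(π / 2), 1 / Real.sqrt (1 + Real.sin θ ^ 2)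

/-- The residues `Bₙ = (2n+1)(π²/K²)(-1)ⁿ e^{-(n+1/2)π}/(1 + e^{-(2n+1)π})` of the
exact infrared propagator. -/
noncomputable def B (n : ℕ) : ℝ :=
  (2 * (n : ℝ) + 1) * (π ^ 2 / Kell ^ 2) *
    ((-1 : ℝ) ^ n * Real.exp (-((n : ℝ) + 1 / 2) * π) /
      (1 + Real.exp (-(2 * (n : ℝ) + 1) * π)))

/-- The mass spectrum `mₙ = (n + 1/2)(π/K)(λ/2)^{1/4} μ`. -/
noncomputable def msp (lam μ : ℝ) (n : ℕ) : ℝ :=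
  ((n : ℝ) + 1 / 2) * (π / Kell) * (lam / 2) ^ ((1 : ℝ) / 4) * μ

/-- The exact infrared propagator `G(P; λ, μ) = Σₙ Bₙ/(P - mₙ²)`. -/
noncomputable def Gprop (P lam μ : ℝ) : ℝ := ∑' n : ℕ, B n / (P - msp lam μ n ^ 2)

/-- The constant `S = Σₙ (-1)ⁿ e^{-(n+1/2)π} / ((2n+1)(1 + e^{-(2n+1)π}))`. -/
noncomputable def Sconst : ℝ :=
  ∑' n : ℕ, (-1 : ℝ) ^ n * Real.exp (-((n : ℝ) + 1 / 2) * π) /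
    ((2 * (n : ℝ) + 1) * (1 + Real.exp (-(2 * (n : ℝ) + 1) * π)))

theorem Kell_pos : 0 < Kell := by
  have hcont : Continuous fun θ : ℝ => 1 / Real.sqrt (1 + Real.sin θ ^ 2) := by
    apply Continuous.div continuous_const
    · exact Real.continuous_sqrt.comp (by continuity)
    · intro x
      have : (0:ℝ) < 1 + Real.sin x ^ 2 := by positivity
      positivity
  exact intervalIntegral.intervalIntegral_pos_of_pos_on
    (hcont.intervalIntegrable 0 (π/2))
    (fun x _ => by positivity) (by positivity)

theorem msp_sq (lam μ : ℝ) (hlam : 0 ≤ lam) (n : ℕ) :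
    msp lam μ n ^ 2
      = (((n:ℝ)+1/2)^2 * (π/Kell)^2) * (Real.sqrt (lam/2) * μ^2) := by
  have ht : ((lam/2) ^ ((1:ℝ)/4)) ^ (2:ℕ) = Real.sqrt (lam/2) := by
    rw [← Real.rpow_natCast ((lam/2)^((1:ℝ)/4)) 2, ← Real.rpow_mul (by positivity),
      Real.sqrt_eq_rpow]
    norm_num
  rw [msp, mul_pow, mul_pow, mul_pow, ht]; ring

theorem sqrt_half_tendsto : Filter.Tendsto (fun lam : ℝ => Real.sqrt (lam/2))
    Filter.atTop Filter.atTop := by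
  apply Filter.tendsto_atTop_atTop.mpr
  intro b
  refine ⟨2 * (max b 0)^2, fun a ha => le_trans (le_max_left b 0) ?_⟩
  rw [← Real.sqrt_sq (le_max_right b 0)]
  exact Real.sqrt_le_sqrt (by linarith)

theorem sqrt_split (lam : ℝ) : Real.sqrt lam = Real.sqrt 2 * Real.sqrt (lam / 2) := by
  rw [← Real.sqrt_mul (by norm_num : (0:ℝ) ≤ 2)]
  congr 1; ring

/-- abbreviation for the summand of `Sconst`. -/
noncomputable def sterm (n : ℕ) : ℝ :=
  (-1 : ℝ) ^ n * Real.exp (-((n : ℝ) + 1 / 2) * π) /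
    ((2 * (n : ℝ) + 1) * (1 + Real.exp (-(2 * (n : ℝ) + 1) * π)))

theorem alg1 (s2 E p k x m A w : ℝ) (hp : p ≠ 0) (hk : k ≠ 0) (hx : x ≠ 0)
    (hm : m ≠ 0) (hw : w ≠ 0) :
    s2 * x * m * ((A * (p^2/k^2) * E) / (w * (p/k)^2 * (x*m) / 2))
      = (2 * s2 * E) * (A / w) := by
  field_simp

set_option maxHeartbeats 1000000 in
/-- Nambu–Jona-Lasinio limit: for fixed `μ > 0` and `P`, the propagator is defined
for all sufficiently large `λ` and `√λ μ² G(P; λ, μ) → -4√2 S` as `λ → ∞`; i.e. in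
the strong-coupling (equivalently low-momentum) limit the propagator reduces at
leading order to a momentum-independent contact term of order `λ^{-1/2}`. -/
theorem strong_coupling_NJL_limit (μ : ℝ) (hμ : 0 < μ) (P : ℝ) :
    (∀ᶠ lam in Filter.atTop, ∀ n : ℕ, P ≠ msp lam μ n ^ 2) ∧
    Filter.Tendsto (fun lam : ℝ => Real.sqrt lam * μ ^ 2 * Gprop P lam μ)
      Filter.atTop (nhds (-(4 * Real.sqrt 2 * Sconst))) := by
  have hπ : (0:ℝ) < π := Real.pi_pos
  have hK : (0:ℝ) < Kell := Kell_pos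
  set c : ℝ → ℝ := fun lam => (π/Kell)^2 * (Real.sqrt (lam/2) * μ^2) with hc_def
  have hc_top : Filter.Tendsto c Filter.atTop Filter.atTop := by
    have h1 : Filter.Tendsto (fun lam : ℝ => Real.sqrt (lam/2) * μ^2)
        Filter.atTop Filter.atTop := sqrt_half_tendsto.atTop_mul_const (by positivity)
    exact h1.const_mul_atTop (by positivity)
  -- eventual regime
  have hev : ∀ᶠ lam in Filter.atTop, 0 ≤ lam ∧ 8*(|P|+1) ≤ c lam :=
    (Filter.eventually_ge_atTop 0).and (hc_top.eventually_ge_atTop _)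
  -- In the regime, |P| is less than every msp²
  have hlt : ∀ lam : ℝ, 0 ≤ lam → 8*(|P|+1) ≤ c lam → ∀ n : ℕ,
      |P| + 1 ≤ msp lam μ n ^ 2 := by
    intro lam h0 h8 n
    have hmsp : msp lam μ n ^ 2 = ((n:ℝ)+1/2)^2 * c lam := by
      rw [msp_sq lam μ h0 n, hc_def]; ring
    have hc0 : (0:ℝ) ≤ c lam := by have := abs_nonneg P; linarith
    have hw : (1:ℝ)/4 ≤ ((n:ℝ)+1/2)^2 := by
      have : (0:ℝ) ≤ (n:ℝ) := Nat.cast_nonneg n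
      nlinarith
    have h2 : (1:ℝ)/4 * c lam ≤ ((n:ℝ)+1/2)^2 * c lam :=
      mul_le_mul_of_nonneg_right hw hc0
    rw [hmsp]
    have := abs_nonneg P
    nlinarith
  constructor
  · filter_upwards [hev] with lam ⟨h0, h8⟩ n heq
    have := hlt lam h0 h8 n
    have := le_abs_self P
    linarith [heq ▸ this]
  -- the main limit
  · set f : ℝ → ℕ → ℝ := fun lam n =>
      Real.sqrt lam * μ^2 * (B n / (P - msp lam μ n ^ 2)) with hf_def
    set a : ℕ → ℝ := fun n => ((n:ℝ)+1/2)^2 * (π/Kell)^2 with ha_def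
    have ha_pos : ∀ n, 0 < a n := by
      intro n
      have : (0:ℝ) ≤ (n:ℝ) := Nat.cast_nonneg n
      rw [ha_def]; positivity
    set g : ℕ → ℝ := fun n => B n * (Real.sqrt 2 / (0 - a n)) with hg_def
    -- termwise limits
    have hab : ∀ n : ℕ, Filter.Tendsto (fun lam => f lam n) Filter.atTop (nhds (g n)) := by
      intro n
      have h1 : Filter.Tendsto (fun lam : ℝ => P / (Real.sqrt (lam/2) * μ^2))
          Filter.atTop (nhds 0) :=
        tendsto_const_nhds.div_atTop (sqrt_half_tendsto.atTop_mul_const (by positivity))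
      have h2 : Filter.Tendsto
          (fun lam : ℝ => B n * (Real.sqrt 2 / (P / (Real.sqrt (lam/2) * μ^2) - a n)))
          Filter.atTop (nhds (g n)) := by
        apply Filter.Tendsto.const_mul
        exact tendsto_const_nhds.div (h1.sub tendsto_const_nhds)
          (by intro h; have := ha_pos n; linarith)
      refine h2.congr' ?_
      filter_upwards [Filter.eventually_ge_atTop (1:ℝ)] with lam h1lam
      have h0 : (0:ℝ) ≤ lam := by linarith
      have hx : 0 < Real.sqrt (lam/2) := Real.sqrt_pos.mpr (by linarith)
      have hxm : Real.sqrt (lam/2) * μ^2 ≠ 0 := by positivity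
      have hmsp : msp lam μ n ^ 2 = a n * (Real.sqrt (lam/2) * μ^2) := by
        rw [msp_sq lam μ h0 n, ha_def]
      rw [hf_def]
      simp only
      rw [hmsp, sqrt_split lam,
        show P / (Real.sqrt (lam/2) * μ^2) - a n
          = (P - a n * (Real.sqrt (lam/2) * μ^2)) / (Real.sqrt (lam/2) * μ^2) by
            field_simp,
        div_div_eq_mul_div]
      ring
    -- dominated convergence bound
    have hbound : ∀ᶠ lam in Filter.atTop, ∀ n : ℕ,
        ‖f lam n‖ ≤ (8 * Real.sqrt 2 * Real.exp (-(π/2))) * Real.exp (-π) ^ n := by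
      filter_upwards [hev] with lam ⟨h0, h8⟩ n
      have hx : 0 < Real.sqrt (lam/2) := by
        rcases lt_or_ge 0 (Real.sqrt (lam/2)) with h | h
        · exact h
        · exfalso
          have : c lam ≤ 0 := by
            rw [hc_def]
            have : Real.sqrt (lam/2) * μ^2 ≤ 0 :=
              mul_nonpos_of_nonpos_of_nonneg h (by positivity)
            nlinarith [sq_nonneg (π/Kell)]
          have := abs_nonneg P; linarith
      set x := Real.sqrt (lam/2) with hx_def
      have hmsp : msp lam μ n ^ 2 = a n * (x * μ^2) := by
        rw [msp_sq lam μ h0 n, ha_def]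
      have hw : (1:ℝ)/4 ≤ ((n:ℝ)+1/2)^2 := by
        have : (0:ℝ) ≤ (n:ℝ) := Nat.cast_nonneg n
        nlinarith
      have hcform : a n * (x * μ^2) = ((n:ℝ)+1/2)^2 * c lam := by
        rw [ha_def, hc_def]; ring
      have hc0 : (0:ℝ) < c lam := by have := abs_nonneg P; linarith
      have hD : (0:ℝ) < a n * (x * μ^2) := by
        have := ha_pos n; positivity
      -- denominator lower bound
      have hden : a n * (x * μ^2) / 2 ≤ |P - a n * (x * μ^2)| := by
        have hP8 : |P| ≤ c lam / 8 := by linarith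
        have h14 : c lam / 4 ≤ a n * (x * μ^2) := by
          rw [hcform]
          nlinarith
        calc a n * (x * μ^2) / 2
            = a n * (x * μ^2) - a n * (x * μ^2) / 2 := by ring
          _ ≤ |a n * (x * μ^2)| - |P| := by
              rw [abs_of_pos hD]; linarith
          _ ≤ |a n * (x * μ^2) - P| := abs_sub_abs_le_abs_sub _ _
          _ = |P - a n * (x * μ^2)| := abs_sub_comm _ _
      -- bound on |B n|
      have hy : (0:ℝ) < 1 + Real.exp (-(2 * (n : ℝ) + 1) * π) := by positivity
      have hBb : |B n| ≤ (2*(n:ℝ)+1) * (π^2/Kell^2) * Real.exp (-((n:ℝ)+1/2)*π) := by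
        have hBeq : B n = ((2*(n:ℝ)+1) * (π^2/Kell^2) *
            (Real.exp (-((n:ℝ)+1/2)*π) / (1 + Real.exp (-(2*(n:ℝ)+1)*π)))) * (-1)^n := by
          simp only [B]; ring
        rw [hBeq, abs_mul, abs_pow, abs_neg, abs_one, one_pow, mul_one,
          abs_of_nonneg (by positivity)]
        have h1 : Real.exp (-((n:ℝ)+1/2)*π) / (1 + Real.exp (-(2*(n:ℝ)+1)*π))
            ≤ Real.exp (-((n:ℝ)+1/2)*π) :=
          div_le_self (Real.exp_nonneg _) (by linarith [Real.exp_pos (-(2*(n:ℝ)+1)*π)])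
        have h2 : (0:ℝ) ≤ (2*(n:ℝ)+1) * (π^2/Kell^2) := by positivity
        nlinarith
      have hEsplit : Real.exp (-((n:ℝ)+1/2)*π) = Real.exp (-(π/2)) * Real.exp (-π) ^ n := by
        rw [← Real.exp_nat_mul, ← Real.exp_add]
        congr 1; ring
      -- assemble
      have hnorm : ‖f lam n‖ = Real.sqrt lam * μ^2 * (|B n| / |P - msp lam μ n ^2|) := by
        rw [hf_def]
        simp only
        rw [Real.norm_eq_abs, abs_mul, abs_div, abs_of_nonneg (by positivity :
          (0:ℝ) ≤ Real.sqrt lam * μ^2)]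
      rw [hnorm, hmsp]
      calc Real.sqrt lam * μ^2 * (|B n| / |P - a n * (x * μ^2)|)
          ≤ Real.sqrt lam * μ^2 *
            (((2*(n:ℝ)+1) * (π^2/Kell^2) * Real.exp (-((n:ℝ)+1/2)*π))
              / (a n * (x * μ^2) / 2)) := by
            refine mul_le_mul_of_nonneg_left ?_ (by positivity)
            exact div_le_div₀ (by positivity) hBb (half_pos hD) hden
        _ = (2 * Real.sqrt 2 * (Real.exp (-(π/2)) * Real.exp (-π) ^ n))
              * ((2*(n:ℝ)+1) / ((n:ℝ)+1/2)^2) := by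
            rw [sqrt_split lam, ← hx_def, hEsplit]
            simp only [ha_def]
            exact alg1 (Real.sqrt 2) (Real.exp (-(π/2)) * Real.exp (-π) ^ n) π Kell x
              (μ^2) (2*(n:ℝ)+1) (((n:ℝ)+1/2)^2) (ne_of_gt hπ) (ne_of_gt hK)
              (ne_of_gt hx) (by positivity) (by positivity)
        _ ≤ (2 * Real.sqrt 2 * (Real.exp (-(π/2)) * Real.exp (-π) ^ n)) * 4 := by
            refine mul_le_mul_of_nonneg_left ?_ (by positivity)
            rw [div_le_iff₀ (by positivity)]
            have : (0:ℝ) ≤ (n:ℝ) := Nat.cast_nonneg n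
            nlinarith
        _ = (8 * Real.sqrt 2 * Real.exp (-(π/2))) * Real.exp (-π) ^ n := by ring
    -- summability of the bound
    have hsummable : Summable (fun n : ℕ =>
        (8 * Real.sqrt 2 * Real.exp (-(π/2))) * Real.exp (-π) ^ n) :=
      (summable_geometric_of_lt_one (Real.exp_nonneg _)
        (Real.exp_lt_one_iff.mpr (by linarith))).mul_left _
    have hmain := tendsto_tsum_of_dominated_convergence hsummable hab hbound
    -- identify the limit value
    have hsum : (∑' n, g n) = -(4 * Real.sqrt 2 * Sconst) := by
      have hg : ∀ n, g n = (-(4 * Real.sqrt 2)) * sterm n := by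
        intro n
        have hy : (0:ℝ) < 1 + Real.exp (-(2 * (n : ℝ) + 1) * π) := by positivity
        have hn1 : (2*(n:ℝ)+1) ≠ 0 := by positivity
        have hn2 : ((n:ℝ)+1/2) ≠ 0 := by positivity
        simp only [hg_def, ha_def, B, sterm]
        field_simp
        ring
      calc (∑' n, g n) = ∑' n, (-(4 * Real.sqrt 2)) * sterm n := tsum_congr hg
        _ = (-(4 * Real.sqrt 2)) * ∑' n, sterm n := tsum_mul_left
        _ = -(4 * Real.sqrt 2 * Sconst) := by simp only [neg_mul, Sconst, sterm]
    rw [hsum] at hmain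
    apply hmain.congr
    intro lam
    rw [hf_def]
    simp only
    rw [Gprop, ← tsum_mul_left]
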